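/- Let Q be a Schwartz solution of ΔQ - Q + Q^p = 0 on R^N, L_+ = -Δ + 1 - pQ^{p-1}, and suppose ρ ∈ H^1 solves L_+ ρ = (|y|²/4) Q. Then 2(ρ, Q)_{L^2} = ((1+σ_c)/4) ‖yQ‖_{L^2}², where σ_c = N/2 - 2/(p-1). -/

import Mathlib

open MeasureTheory SchwartzMap

/-- The Laplacian of a real-valued function on `ℝ^N`. -/
noncomputable def lapR {N : ℕ} (f : EuclideanSpace ℝ (Fin N) → ℝ)
    (x : EuclideanSpace ℝ (Fin N)) : ℝ :=
  ∑ i : Fin N, fderiv ℝ (fun y => fderiv ℝ f y (EuclideanSpace.single i 1)) x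
    (EuclideanSpace.single i 1)


variable {N : ℕ}
local notation "E" => EuclideanSpace ℝ (Fin N)




noncomputable def ee (N : ℕ) (i : Fin N) : EuclideanSpace ℝ (Fin N) := EuclideanSpace.single i 1
noncomputable def DD {N : ℕ} (i : Fin N) (f : 𝓢(EuclideanSpace ℝ (Fin N), ℝ)) :
    𝓢(EuclideanSpace ℝ (Fin N), ℝ) := LineDeriv.lineDerivOpCLM ℝ 𝓢(EuclideanSpace ℝ (Fin N), ℝ) (ee N i) f

lemma DD_apply {i : Fin N} (f : 𝓢(E, ℝ)) (x : E) : DD i f x = fderiv ℝ f x (ee N i) := rfl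

lemma coe_DD {i : Fin N} (f : 𝓢(E, ℝ)) : ⇑(DD i f) = fun x => fderiv ℝ (⇑f) x (ee N i) := rfl

-- second derivative symmetry
lemma DD_symm (f : 𝓢(E, ℝ)) (i j : Fin N) (x : E) : DD i (DD j f) x = DD j (DD i f) x := by
  have hdf : Differentiable ℝ (fderiv ℝ (⇑f)) := by
    have := (f.smooth ⊤).fderiv_right (m := 1) (WithTop.coe_le_coe.mpr le_top)
    exact this.differentiable (by simp)
  have key : ∀ v w : E, fderiv ℝ (fun y => fderiv ℝ (⇑f) y v) x w
      = fderiv ℝ (fderiv ℝ (⇑f)) x w v := by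
    intro v w
    have : (fun y => fderiv ℝ (⇑f) y v)
        = (fun L : E →L[ℝ] ℝ => L v) ∘ (fderiv ℝ (⇑f)) := rfl
    rw [this]
    have h1 : HasFDerivAt (fderiv ℝ (⇑f)) (fderiv ℝ (fderiv ℝ (⇑f)) x) x :=
      (hdf x).hasFDerivAt
    have h2 := ((ContinuousLinearMap.apply ℝ ℝ v).hasFDerivAt.comp x h1)
    rw [show fderiv ℝ ((fun L : E →L[ℝ] ℝ => L v) ∘ (fderiv ℝ (⇑f))) x = ((ContinuousLinearMap.apply ℝ ℝ v).comp (fderiv ℝ (fderiv ℝ (⇑f)) x)) from h2.fderiv]; rfl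
  have symm : ∀ v w : E, fderiv ℝ (fderiv ℝ (⇑f)) x v w = fderiv ℝ (fderiv ℝ (⇑f)) x w v := by
    intro v w
    exact second_derivative_symmetric (fun y => (f.differentiable y).hasFDerivAt)
      ((hdf x).hasFDerivAt) v w
  rw [DD_apply, DD_apply, coe_DD, coe_DD, key, key, symm]


noncomputable def cLM {N : ℕ} (i : Fin N) : EuclideanSpace ℝ (Fin N) →L[ℝ] ℝ :=
  EuclideanSpace.proj i

lemma cLM_apply {i : Fin N} (x : E) : cLM i x = x i := rfl

lemma cLM_e (i j : Fin N) : cLM i (ee N j) = if i = j then (1:ℝ) else 0 := by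
  simp [cLM, ee, EuclideanSpace.single_apply]

lemma abs_coord_le (i : Fin N) (x : E) : |x i| ≤ ‖x‖ := by
  rw [EuclideanSpace.norm_eq, ← Real.sqrt_sq_eq_abs]
  apply Real.sqrt_le_sqrt
  have := Finset.single_le_sum (f := fun j => ‖x j‖^2) (fun j _ => by positivity)
    (Finset.mem_univ i)
  simpa [Real.norm_eq_abs, sq_abs] using this

noncomputable def nsq {N : ℕ} (x : EuclideanSpace ℝ (Fin N)) : ℝ := ∑ j, x j * x j

lemma nsq_eq (x : E) : nsq x = ‖x‖^2 := by
  rw [EuclideanSpace.norm_eq, Real.sq_sqrt (by positivity)]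
  simp [nsq, Real.norm_eq_abs, sq_abs, sq]

lemma nsq_cont : Continuous (nsq (N := N)) := by
  apply continuous_finset_sum
  intro j _
  exact ((cLM j).continuous).mul ((cLM j).continuous)

lemma hasFDerivAt_nsq (x : E) :
    HasFDerivAt nsq (∑ j, (x j • (cLM j : E →L[ℝ] ℝ) + x j • (cLM j : E →L[ℝ] ℝ))) x := by
  have h : ∀ j ∈ Finset.univ, HasFDerivAt (fun y : E => cLM j y * cLM j y)
      (x j • (cLM j : E →L[ℝ] ℝ) + x j • (cLM j : E →L[ℝ] ℝ)) x := by
    intro j _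
    exact ((cLM (N := N) j).hasFDerivAt (x := x)).mul
      ((cLM (N := N) j).hasFDerivAt (x := x))
  exact HasFDerivAt.fun_sum h


lemma abs_le_bnd (f : 𝓢(E, ℝ)) (x : E) : |f x| ≤ (SchwartzMap.seminorm ℝ 0 0) f := by
  simpa [Real.norm_eq_abs] using SchwartzMap.norm_le_seminorm ℝ f x

lemma bnd_nonneg (f : 𝓢(E, ℝ)) : 0 ≤ (SchwartzMap.seminorm ℝ 0 0) f :=
  le_trans (abs_nonneg _) (abs_le_bnd f 0)

lemma integrable_one_add_pow (G : 𝓢(E, ℝ)) (k : ℕ) :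
    Integrable (fun x : E => (1+‖x‖)^k * ‖G x‖) volume := by
  have h : (fun x : E => (1+‖x‖)^k * ‖G x‖)
      = fun x => ∑ j ∈ Finset.range (k+1), (k.choose j : ℝ) * (‖x‖^j * ‖G x‖) := by
    funext x
    rw [add_comm (1:ℝ), add_pow, Finset.sum_mul]
    exact Finset.sum_congr rfl fun j _ => by ring
  rw [h]
  exact integrable_finset_sum _ fun j _ => (G.integrable_pow_mul volume j).const_mul _

lemma integrable_bound (G : 𝓢(E, ℝ)) (h : E → ℝ) (hcont : Continuous h) (C : ℝ) (k : ℕ)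
    (hb : ∀ x, |h x| ≤ C * ((1+‖x‖)^k * ‖G x‖)) : Integrable h volume := by
  refine Integrable.mono' ((integrable_one_add_pow G k).const_mul C)
    hcont.aestronglyMeasurable ?_
  filter_upwards with x
  simpa [Real.norm_eq_abs] using hb x

lemma integrable_poly_mul (f g : 𝓢(E, ℝ)) (w : E → ℝ) (hw : Continuous w) (C : ℝ) (k : ℕ)
    (hwb : ∀ x, |w x| ≤ C * (1+‖x‖)^k) :
    Integrable (fun x => w x * (f x * g x)) volume := by
  refine integrable_bound g _ (hw.mul (f.continuous.mul g.continuous))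
    (C * (SchwartzMap.seminorm ℝ 0 0) f) k fun x => ?_
  have h1 : |w x * (f x * g x)| = |w x| * (|f x| * |g x|) := by
    rw [abs_mul, abs_mul]
  rw [h1, Real.norm_eq_abs]
  have h2 : |w x| * (|f x| * |g x|) ≤ (C * (1+‖x‖)^k) * ((SchwartzMap.seminorm ℝ 0 0) f * |g x|) := by
    exact mul_le_mul (hwb x)
      (mul_le_mul_of_nonneg_right (abs_le_bnd f x) (abs_nonneg _))
      (by positivity) (le_trans (abs_nonneg _) (hwb x))
  calc |w x| * (|f x| * |g x|) ≤ (C * (1+‖x‖)^k) * ((SchwartzMap.seminorm ℝ 0 0) f * |g x|) := h2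
  _ = C * (SchwartzMap.seminorm ℝ 0 0) f * ((1 + ‖x‖) ^ k * |g x|) := by ring

lemma intc {f g : E → ℝ} (h : ∀ x, f x = g x) :
    (∫ x : E, f x) = ∫ x : E, g x := by
  congr 1
  exact funext h
lemma lapR_eq (f : 𝓢(E, ℝ)) (x : E) : lapR (⇑f) x = ∑ i, DD i (DD i f) x := rfl

lemma ibp_gen (i : Fin N) (f g f' g' : E → ℝ)
    (hf : Differentiable ℝ f) (hg : Differentiable ℝ g)
    (hf' : ∀ x, fderiv ℝ f x (ee N i) = f' x) (hg' : ∀ x, fderiv ℝ g x (ee N i) = g' x)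
    (h1 : Integrable (fun x => f' x * g x) volume)
    (h2 : Integrable (fun x => f x * g' x) volume)
    (h3 : Integrable (fun x => f x * g x) volume) :
    ∫ x : E, f x * g' x = - ∫ x : E, f' x * g x := by
  have e1 : (fun x : E => fderiv ℝ f x (ee N i) * g x) = fun x => f' x * g x := by
    funext x; rw [hf' x]
  have e2 : (fun x : E => f x * fderiv ℝ g x (ee N i)) = fun x => f x * g' x := by
    funext x; rw [hg' x]
  have h := integral_mul_fderiv_eq_neg_fderiv_mul_of_integrable (μ := volume) (v := ee N i)
    (f := f) (g := g) (by rw [e1]; exact h1) (by rw [e2]; exact h2) h3 (fun x _ => hf x) (fun x _ => hg x)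
  rw [e1, e2] at h
  exact h

lemma integrable_pair (f g : 𝓢(E, ℝ)) : Integrable (fun x => f x * g x) volume := by
  have h := integrable_poly_mul f g (fun _ => (1:ℝ)) continuous_const 1 0 (by intro x; simp)
  simpa using h

lemma norm_le_one_add (x : E) : ‖x‖ ≤ 1 + ‖x‖ := by linarith [norm_nonneg x]

lemma integrable_coord_pair (i : Fin N) (f g : 𝓢(E, ℝ)) :
    Integrable (fun x => cLM i x * (f x * g x)) volume := by
  refine integrable_poly_mul f g (cLM i) (cLM i).continuous 1 1 fun x => ?_
  rw [one_mul, pow_one, cLM_apply]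
  exact le_trans (abs_coord_le i x) (norm_le_one_add x)

lemma diff_coord_mul (i : Fin N) (f : 𝓢(E, ℝ)) :
    Differentiable ℝ (fun y : E => cLM i y * f y) :=
  ((cLM i).differentiable).mul f.differentiable

lemma fderiv_coord_mul (i j : Fin N) (f : 𝓢(E, ℝ)) (x : E) :
    fderiv ℝ (fun y : E => cLM i y * f y) x (ee N j)
      = (if i = j then (1:ℝ) else 0) * f x + cLM i x * DD j f x := by
  have h : fderiv ℝ (fun y : E => cLM i y * f y) x = _ := (((cLM (N := N) i).hasFDerivAt (x := x)).mul
    (f.differentiableAt.hasFDerivAt)).fderiv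
  rw [h]
  simp only [ContinuousLinearMap.add_apply, ContinuousLinearMap.smul_apply, smul_eq_mul,
    cLM_e, DD_apply]
  ring

lemma ibp_pair (j : Fin N) (f g : 𝓢(E, ℝ)) :
    ∫ x : E, f x * DD j g x = -∫ x : E, DD j f x * g x := by
  refine ibp_gen j (⇑f) (⇑g) (⇑(DD j f)) (⇑(DD j g)) f.differentiable g.differentiable
    (fun x => rfl) (fun x => rfl) (integrable_pair _ _) (integrable_pair _ _)
    (integrable_pair _ _)

lemma ibp_coord' (i j : Fin N) (f g : 𝓢(E, ℝ)) :
    ∫ x : E, (cLM i x * f x) * DD j g x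
      = -∫ x : E, ((if i = j then (1:ℝ) else 0) * f x + cLM i x * DD j f x) * g x := by
  refine ibp_gen j (fun x => cLM i x * f x) (⇑g)
    (fun x => (if i = j then (1:ℝ) else 0) * f x + cLM i x * DD j f x) (⇑(DD j g))
    (diff_coord_mul i f) g.differentiable (fderiv_coord_mul i j f) (fun x => rfl)
    ?_ ?_ ?_
  · have h := ((integrable_pair f g).const_mul (if i = j then (1:ℝ) else 0)).add
      (integrable_coord_pair i (DD j f) g)
    exact h.congr (Filter.Eventually.of_forall fun x => by simp only [Pi.add_apply]; ring)
  · exact (integrable_coord_pair i f (DD j g)).congr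
      (Filter.Eventually.of_forall fun x => by ring)
  · exact (integrable_coord_pair i f g).congr
      (Filter.Eventually.of_forall fun x => by ring)

lemma ibp_coord (i : Fin N) (f g : 𝓢(E, ℝ)) :
    ∫ x : E, (cLM i x * f x) * DD i g x
      = -∫ x : E, (f x + cLM i x * DD i f x) * g x := by
  have h := ibp_coord' i i f g
  simpa using h
section rpow

lemma hasF_rpow {p : ℝ} (Q : 𝓢(E, ℝ)) (hQpos : ∀ y : E, 0 < Q y) (x : E) : HasFDerivAt (fun y : E => Q y ^ p)
    ((p * Q x ^ (p-1)) • fderiv ℝ (⇑Q) x) x :=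
  (Real.hasDerivAt_rpow_const (p := p) (Or.inl (hQpos x).ne')).comp_hasFDerivAt x
    Q.differentiableAt.hasFDerivAt

lemma cont_rpow_sub_one {p : ℝ} (Q : 𝓢(E, ℝ)) (hQpos : ∀ y : E, 0 < Q y) : Continuous (fun y : E => Q y ^ (p - 1)) :=
  Q.continuous.rpow_const (fun x => Or.inl (hQpos x).ne')

lemma rpow_sub_one_le {p : ℝ} (hp : 1 < p) (Q : 𝓢(E, ℝ)) (hQpos : ∀ y : E, 0 < Q y) (x : E) :
    |Q x ^ (p - 1)| ≤ ((SchwartzMap.seminorm ℝ 0 0) Q) ^ (p - 1) := by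
  rw [abs_of_nonneg (Real.rpow_nonneg (hQpos x).le _)]
  exact Real.rpow_le_rpow (hQpos x).le (le_trans (le_abs_self _) (abs_le_bnd Q x))
    (by linarith)

lemma rpow_split {p : ℝ} (Q : 𝓢(E, ℝ)) (hQpos : ∀ y : E, 0 < Q y) (x : E) : Q x ^ p = Q x ^ (p - 1) * Q x := by
  have h := Real.rpow_add (hQpos x) (p-1) 1
  rw [Real.rpow_one] at h
  rw [← h]
  norm_num

lemma ibp_rpow {p : ℝ} (hp : 1 < p) (Q : 𝓢(E, ℝ)) (hQpos : ∀ y : E, 0 < Q y)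
    (i : Fin N) (f : 𝓢(E, ℝ)) :
    ∫ x : E, (cLM i x * f x) * (p * Q x ^ (p-1) * DD i Q x)
      = -∫ x : E, (f x + cLM i x * DD i f x) * Q x ^ p := by
  set MQ := ((SchwartzMap.seminorm ℝ 0 0) Q) ^ (p - 1) with hMQ
  have hMQ0 : 0 ≤ MQ := Real.rpow_nonneg (bnd_nonneg Q) _
  have hIfg : Integrable (fun x : E => (cLM i x * f x) * Q x ^ p) volume := by
    have h := integrable_poly_mul f Q (fun x => cLM i x * Q x ^ (p-1))
      ((cLM i).continuous.mul (cont_rpow_sub_one Q hQpos)) MQ 1 ?_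
    · exact h.congr (Filter.Eventually.of_forall fun x => by
        show cLM i x * Q x ^ (p-1) * (f x * Q x) = cLM i x * f x * Q x ^ p
        linear_combination (-(cLM i x * f x)) * rpow_split Q hQpos x)
    · intro x
      rw [abs_mul, pow_one, cLM_apply]
      calc |x i| * |Q x ^ (p-1)| ≤ ‖x‖ * MQ :=
        mul_le_mul (abs_coord_le i x) (rpow_sub_one_le hp Q hQpos x) (abs_nonneg _) (norm_nonneg x)
      _ ≤ MQ * (1 + ‖x‖) := by nlinarith [norm_nonneg x]
  have hIf'g : Integrable (fun x : E => (f x + cLM i x * DD i f x) * Q x ^ p) volume := by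
    have h1 := integrable_poly_mul f Q (fun x : E => Q x ^ (p-1))
      (cont_rpow_sub_one Q hQpos) MQ 0 (fun x => by
        simpa using (rpow_sub_one_le hp Q hQpos x))
    have h2 := integrable_poly_mul (DD i f) Q (fun x => cLM i x * Q x ^ (p-1))
      ((cLM i).continuous.mul (cont_rpow_sub_one Q hQpos)) MQ 1 ?_
    · exact (h1.add h2).congr (Filter.Eventually.of_forall fun x => by
        show Q x ^ (p-1) * (f x * Q x) + cLM i x * Q x ^ (p-1) * (DD i f x * Q x)
          = (f x + cLM i x * DD i f x) * Q x ^ p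
        linear_combination (-(f x + cLM i x * DD i f x)) * rpow_split Q hQpos x)
    · intro x
      rw [abs_mul, pow_one, cLM_apply]
      calc |x i| * |Q x ^ (p-1)| ≤ ‖x‖ * MQ :=
        mul_le_mul (abs_coord_le i x) (rpow_sub_one_le hp Q hQpos x) (abs_nonneg _) (norm_nonneg x)
      _ ≤ MQ * (1 + ‖x‖) := by nlinarith [norm_nonneg x]
  have hIfg' : Integrable (fun x : E => (cLM i x * f x) * (p * Q x ^ (p-1) * DD i Q x)) volume := by
    have h := integrable_poly_mul f (DD i Q) (fun x => p * (cLM i x * Q x ^ (p-1)))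
      (continuous_const.mul ((cLM i).continuous.mul (cont_rpow_sub_one Q hQpos)))
      (|p| * MQ) 1 ?_
    · exact h.congr (Filter.Eventually.of_forall fun x => by
        show p * (cLM i x * Q x ^ (p-1)) * (f x * DD i Q x)
          = cLM i x * f x * (p * Q x ^ (p-1) * DD i Q x)
        ring)
    · intro x
      rw [abs_mul, abs_mul, pow_one, cLM_apply]
      calc |p| * (|x i| * |Q x ^ (p-1)|) ≤ |p| * (‖x‖ * MQ) := by
            refine mul_le_mul_of_nonneg_left ?_ (abs_nonneg p)
            exact mul_le_mul (abs_coord_le i x) (rpow_sub_one_le hp Q hQpos x)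
              (abs_nonneg _) (norm_nonneg x)
      _ ≤ |p| * MQ * (1 + ‖x‖) := by nlinarith [norm_nonneg x, abs_nonneg p]
  have key := ibp_gen i (fun x => cLM i x * f x) (fun y : E => Q y ^ p)
    (fun x => f x + cLM i x * DD i f x) (fun x => p * Q x ^ (p-1) * DD i Q x)
    (diff_coord_mul i f) (fun x => (hasF_rpow Q hQpos x).differentiableAt)
    (fun x => by rw [fderiv_coord_mul i i f x]; simp)
    (fun x => by
      rw [(hasF_rpow Q hQpos x).fderiv]
      simp only [ContinuousLinearMap.smul_apply, smul_eq_mul]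
      rw [← DD_apply])
    hIf'g hIfg' hIfg
  exact key
end rpow
lemma diff_nsq : Differentiable ℝ (nsq (N := N)) :=
  fun x => (hasFDerivAt_nsq x).differentiableAt

lemma Lnsq_apply (x : E) (i : Fin N) :
    (∑ j, (x j • (cLM j : E →L[ℝ] ℝ) + x j • (cLM j : E →L[ℝ] ℝ))) (ee N i) = 2 * x i := by
  simp only [ContinuousLinearMap.coe_sum', Finset.sum_apply, ContinuousLinearMap.add_apply,
    ContinuousLinearMap.coe_smul', Pi.smul_apply, smul_eq_mul, cLM_e]
  rw [Finset.sum_add_distrib]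
  simp [Finset.sum_ite_eq', two_mul]

lemma hasF_w3 (Q : 𝓢(E, ℝ)) (i : Fin N) (x : E) :
    HasFDerivAt (fun y : E => cLM i y * nsq y * Q y)
      ((cLM i x * nsq x) • fderiv ℝ (⇑Q) x
        + Q x • (cLM i x • (∑ j, (x j • (cLM j : E →L[ℝ] ℝ) + x j • (cLM j : E →L[ℝ] ℝ)))
            + nsq x • (cLM i : E →L[ℝ] ℝ))) x := by
  have h1 := ((cLM (N := N) i).hasFDerivAt (x := x)).mul (hasFDerivAt_nsq x)
  exact h1.mul Q.differentiableAt.hasFDerivAt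

lemma fderiv_w3 (Q : 𝓢(E, ℝ)) (i : Fin N) (x : E) :
    fderiv ℝ (fun y : E => cLM i y * nsq y * Q y) x (ee N i)
      = (nsq x + 2 * (cLM i x * cLM i x)) * Q x + cLM i x * nsq x * DD i Q x := by
  rw [(hasF_w3 Q i x).fderiv]
  simp only [ContinuousLinearMap.add_apply, ContinuousLinearMap.smul_apply, smul_eq_mul,
    Lnsq_apply, cLM_e, if_pos rfl, DD_apply]
  rw [cLM_apply]
  simp only [eq_self_iff_true, if_true, ite_true, if_pos]
  ring

lemma integrable_w3 (i : Fin N) (f g : 𝓢(E, ℝ)) :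
    Integrable (fun x => (cLM i x * nsq x) * (f x * g x)) volume := by
  refine integrable_poly_mul f g (fun x => cLM i x * nsq x)
    ((cLM i).continuous.mul nsq_cont) 1 3 fun x => ?_
  rw [one_mul, abs_mul, nsq_eq, abs_of_nonneg (by positivity : (0:ℝ) ≤ ‖x‖^2), cLM_apply]
  calc |x i| * ‖x‖^2 ≤ ‖x‖ * ‖x‖^2 :=
    mul_le_mul_of_nonneg_right (abs_coord_le i x) (by positivity)
  _ = ‖x‖^3 := by ring
  _ ≤ (1 + ‖x‖)^3 := pow_le_pow_left₀ (norm_nonneg x) (norm_le_one_add x) 3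

lemma integrable_nsq_pair (i : Fin N) (f g : 𝓢(E, ℝ)) :
    Integrable (fun x => (nsq x + 2 * (cLM i x * cLM i x)) * (f x * g x)) volume := by
  refine integrable_poly_mul f g (fun x => nsq x + 2 * (cLM i x * cLM i x))
    (nsq_cont.add (continuous_const.mul ((cLM i).continuous.mul (cLM i).continuous))) 3 2
    fun x => ?_
  have h1 : |x i * x i| ≤ ‖x‖^2 := by
    rw [abs_mul]
    calc |x i| * |x i| ≤ ‖x‖ * ‖x‖ :=
      mul_le_mul (abs_coord_le i x) (abs_coord_le i x) (abs_nonneg _) (norm_nonneg x)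
    _ = ‖x‖^2 := by ring
  have h2 : |nsq x + 2 * (cLM i x * cLM i x)| ≤ 3 * ‖x‖^2 := by
    rw [cLM_apply]
    calc |nsq x + 2 * (x i * x i)| ≤ |nsq x| + 2 * |x i * x i| := by
          have := abs_add_le (nsq x) (2 * (x i * x i))
          rw [abs_mul, abs_two] at this
          linarith
    _ ≤ ‖x‖^2 + 2 * ‖x‖^2 := by
          rw [nsq_eq, abs_of_nonneg (by positivity : (0:ℝ) ≤ ‖x‖^2)]
          linarith
    _ = 3 * ‖x‖^2 := by ring
  calc |nsq x + 2 * (cLM i x * cLM i x)| ≤ 3 * ‖x‖^2 := h2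
  _ ≤ 3 * (1 + ‖x‖)^2 := by
        have := pow_le_pow_left₀ (norm_nonneg x) (norm_le_one_add x) 2
        linarith
lemma ibp_w3 (Q : 𝓢(E, ℝ)) (i : Fin N) :
    ∫ x : E, (cLM i x * nsq x * Q x) * DD i Q x
      = -∫ x : E, ((nsq x + 2 * (cLM i x * cLM i x)) * Q x + cLM i x * nsq x * DD i Q x) * Q x := by
  refine ibp_gen i (fun y => cLM i y * nsq y * Q y) (⇑Q)
    (fun x => (nsq x + 2 * (cLM i x * cLM i x)) * Q x + cLM i x * nsq x * DD i Q x)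
    (⇑(DD i Q))
    (fun x => ((((cLM i).differentiable x).mul (diff_nsq x)).mul (Q.differentiable x)))
    Q.differentiable (fderiv_w3 Q i) (fun x => rfl) ?_ ?_ ?_
  · have h := (integrable_nsq_pair i Q Q).add (integrable_w3 i (DD i Q) Q)
    exact h.congr (Filter.Eventually.of_forall fun x => by
      simp only [Pi.add_apply]; ring)
  · exact (integrable_w3 i Q (DD i Q)).congr (Filter.Eventually.of_forall fun x => by ring)
  · exact (integrable_w3 i Q Q).congr (Filter.Eventually.of_forall fun x => by ring)
lemma isplit2 (a b f : E → ℝ) (h : ∀ x, f x = a x + b x)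
    (ha : Integrable a volume) (hb : Integrable b volume) :
    ∫ x : E, f x = (∫ x : E, a x) + ∫ x : E, b x := by
  rw [intc h, integral_add ha hb]

lemma isplit3 (a b c f : E → ℝ) (h : ∀ x, f x = a x + b x + c x)
    (ha : Integrable a volume) (hb : Integrable b volume) (hc : Integrable c volume) :
    ∫ x : E, f x = (∫ x : E, a x) + (∫ x : E, b x) + ∫ x : E, c x := by
  rw [intc h, integral_add (f := fun x => a x + b x) (g := c) (ha.add hb) hc, integral_add ha hb]

lemma delta_sum (a : Fin N → ℝ) (i : Fin N) :
    ∑ j, (if i = j then (1:ℝ) else 0) * a j = a i := by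
  simp [ite_mul, Finset.sum_ite_eq]

lemma integrable_nsq_mul (f g : 𝓢(E, ℝ)) :
    Integrable (fun x => nsq x * (f x * g x)) volume := by
  refine integrable_poly_mul f g nsq nsq_cont 1 2 fun x => ?_
  rw [one_mul, nsq_eq, abs_of_nonneg (by positivity : (0:ℝ) ≤ ‖x‖^2)]
  exact pow_le_pow_left₀ (norm_nonneg x) (norm_le_one_add x) 2

lemma integrable_coord_sq_mul (i : Fin N) (f g : 𝓢(E, ℝ)) :
    Integrable (fun x => (cLM i x * cLM i x) * (f x * g x)) volume := by
  refine integrable_poly_mul f g (fun x => cLM i x * cLM i x)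
    ((cLM i).continuous.mul (cLM i).continuous) 1 2 fun x => ?_
  rw [one_mul, abs_mul, cLM_apply]
  calc |x i| * |x i| ≤ ‖x‖ * ‖x‖ :=
    mul_le_mul (abs_coord_le i x) (abs_coord_le i x) (abs_nonneg _) (norm_nonneg x)
  _ = ‖x‖^2 := by ring
  _ ≤ (1+‖x‖)^2 := pow_le_pow_left₀ (norm_nonneg x) (norm_le_one_add x) 2

lemma integrable_rpow_pair {p : ℝ} (hp : 1 < p) (Q : 𝓢(E, ℝ)) (hQpos : ∀ y : E, 0 < Q y)
    (f : 𝓢(E, ℝ)) : Integrable (fun x : E => f x * Q x ^ p) volume := by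
  have h := integrable_poly_mul f Q (fun x : E => Q x ^ (p-1)) (cont_rpow_sub_one Q hQpos)
    ((SchwartzMap.seminorm ℝ 0 0) Q ^ (p-1)) 0
    (fun x => by simpa using rpow_sub_one_le hp Q hQpos x)
  exact h.congr (Filter.Eventually.of_forall fun x => by
    show Q x ^ (p-1) * (f x * Q x) = f x * Q x ^ p
    linear_combination (-(f x)) * rpow_split Q hQpos x)

lemma integrable_coord_rpow {p : ℝ} (hp : 1 < p) (Q : 𝓢(E, ℝ)) (hQpos : ∀ y : E, 0 < Q y)
    (i : Fin N) (f : 𝓢(E, ℝ)) :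
    Integrable (fun x : E => (cLM i x * f x) * Q x ^ p) volume := by
  have h := integrable_poly_mul f Q (fun x => cLM i x * Q x ^ (p-1))
    ((cLM i).continuous.mul (cont_rpow_sub_one Q hQpos))
    ((SchwartzMap.seminorm ℝ 0 0) Q ^ (p-1)) 1 ?_
  · exact h.congr (Filter.Eventually.of_forall fun x => by
      show cLM i x * Q x ^ (p-1) * (f x * Q x) = cLM i x * f x * Q x ^ p
      linear_combination (-(cLM i x * f x)) * rpow_split Q hQpos x)
  · intro x
    rw [abs_mul, pow_one, cLM_apply]
    calc |x i| * |Q x ^ (p-1)| ≤ ‖x‖ * ((SchwartzMap.seminorm ℝ 0 0) Q ^ (p-1)) :=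
      mul_le_mul (abs_coord_le i x) (rpow_sub_one_le hp Q hQpos x) (abs_nonneg _) (norm_nonneg x)
    _ ≤ (SchwartzMap.seminorm ℝ 0 0) Q ^ (p-1) * (1 + ‖x‖) := by
      nlinarith [norm_nonneg x, Real.rpow_nonneg (bnd_nonneg Q) (p-1)]

lemma lap_pairing (f g : 𝓢(E, ℝ)) :
    ∫ x : E, f x * (∑ j, DD j (DD j g) x)
      = -∑ j, ∫ x : E, DD j f x * DD j g x := by
  have h1 : ∀ x : E, f x * (∑ j, DD j (DD j g) x) = ∑ j, f x * DD j (DD j g) x :=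
    fun x => Finset.mul_sum _ _ _
  rw [intc h1, integral_finset_sum _ (fun j _ => integrable_pair f (DD j (DD j g)))]
  rw [← Finset.sum_neg_distrib]
  exact Finset.sum_congr rfl fun j _ => ibp_pair j f (DD j g)

lemma lap_pairing_coord (i : Fin N) (u g : 𝓢(E, ℝ)) :
    ∫ x : E, (cLM i x * u x) * (∑ j, DD j (DD j g) x)
      = -((∫ x : E, u x * DD i g x)
          + ∑ j, ∫ x : E, cLM i x * (DD j u x * DD j g x)) := by
  have h1 : ∀ x : E, (cLM i x * u x) * (∑ j, DD j (DD j g) x)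
      = ∑ j, (cLM i x * u x) * DD j (DD j g) x := fun x => Finset.mul_sum _ _ _
  have hint : ∀ j : Fin N, Integrable (fun x : E => (cLM i x * u x) * DD j (DD j g) x) volume :=
    fun j => (integrable_coord_pair i u (DD j (DD j g))).congr
      (Filter.Eventually.of_forall fun x => by ring)
  rw [intc h1, integral_finset_sum _ (fun j _ => hint j)]
  have h2 : ∀ j : Fin N, ∫ x : E, (cLM i x * u x) * DD j (DD j g) x
      = -((if i = j then (1:ℝ) else 0) * (∫ x : E, u x * DD j g x)
          + ∫ x : E, cLM i x * (DD j u x * DD j g x)) := by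
    intro j
    rw [ibp_coord' i j u (DD j g)]
    congr 1
    refine isplit2 (fun x => (if i = j then (1:ℝ) else 0) * (u x * DD j g x))
      (fun x => cLM i x * (DD j u x * DD j g x)) _ (fun x => by ring)
      ((integrable_pair u (DD j g)).const_mul _)
      ((integrable_coord_pair i (DD j u) (DD j g)).congr
        (Filter.Eventually.of_forall fun x => by ring)) |>.trans ?_
    rw [integral_const_mul]
  rw [Finset.sum_congr rfl fun j _ => h2 j, Finset.sum_neg_distrib]
  congr 1
  rw [Finset.sum_add_distrib, delta_sum]

lemma TT_pairing (i j : Fin N) (f g : 𝓢(E, ℝ)) :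
    ∫ x : E, cLM i x * (DD j (DD i g) x * DD j f x)
      = -((∫ x : E, DD j f x * DD j g x)
          + ∫ x : E, cLM i x * (DD j (DD i f) x * DD j g x)) := by
  have h := ibp_coord i (DD j f) (DD j g)
  have hL : ∫ x : E, (cLM i x * DD j f x) * DD i (DD j g) x
      = ∫ x : E, cLM i x * (DD j (DD i g) x * DD j f x) :=
    intc fun x => by rw [DD_symm g i j x]; ring
  have hR : ∫ x : E, (DD j f x + cLM i x * DD i (DD j f) x) * DD j g x
      = (∫ x : E, DD j f x * DD j g x)
        + ∫ x : E, cLM i x * (DD j (DD i f) x * DD j g x) :=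
    isplit2 _ _ _ (fun x => by rw [DD_symm f i j x]; ring)
      (integrable_pair (DD j f) (DD j g))
      ((integrable_coord_pair i (DD j (DD i f)) (DD j g)).congr
        (Filter.Eventually.of_forall fun x => by ring))
  rw [← hL, h, hR]

/-- If `Q` is a Schwartz positive solution of `ΔQ - Q + Q^p = 0` and `ρ` is a Schwartz solution
of `L₊ ρ = (|y|²/4) Q`, then `2(ρ,Q) = ((1+σ_c)/4) ‖yQ‖²` with `σ_c = N/2 - 2/(p-1)`. -/
theorem rho_Q_pairing (N : ℕ) (hN : 1 ≤ N) (p : ℝ) (hp : 1 < p)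
    (Q ρ : SchwartzMap (EuclideanSpace ℝ (Fin N)) ℝ)
    (hQpos : ∀ y, 0 < Q y)
    (hQeq : ∀ y, lapR (⇑Q) y - Q y + Q y ^ p = 0)
    (hρeq : ∀ y, -lapR (⇑ρ) y + ρ y - p * Q y ^ (p - 1) * ρ y = (‖y‖ ^ 2 / 4) * Q y) :
    2 * (∫ y : EuclideanSpace ℝ (Fin N), ρ y * Q y) =
      ((1 + ((N : ℝ) / 2 - 2 / (p - 1))) / 4) *
        ∫ y : EuclideanSpace ℝ (Fin N), ‖y‖ ^ 2 * Q y ^ 2 := by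
  -- pointwise forms of the equations
  have hq : ∀ x : EuclideanSpace ℝ (Fin N), (∑ j, DD j (DD j Q) x) - Q x + Q x ^ p = 0 := fun x => by
    have h := hQeq x; rwa [lapR_eq] at h
  have hρ : ∀ x : EuclideanSpace ℝ (Fin N), -(∑ j, DD j (DD j ρ) x) + ρ x - p * Q x ^ (p - 1) * ρ x
      = nsq x / 4 * Q x := fun x => by
    have h := hρeq x; rw [lapR_eq] at h; rw [nsq_eq]; exact h
  -- integrability
  have hIρQp := integrable_rpow_pair hp Q hQpos ρ
  have hIl1 : Integrable (fun x : EuclideanSpace ℝ (Fin N) => ρ x * (∑ j, DD j (DD j Q) x)) volume := by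
    have h : (fun x : EuclideanSpace ℝ (Fin N) => ρ x * (∑ j, DD j (DD j Q) x))
        = fun x => ∑ j, ρ x * DD j (DD j Q) x := funext fun x => Finset.mul_sum _ _ _
    rw [h]; exact integrable_finset_sum _ fun j _ => integrable_pair ρ (DD j (DD j Q))
  have hIl2 : Integrable (fun x : EuclideanSpace ℝ (Fin N) => Q x * (∑ j, DD j (DD j ρ) x)) volume := by
    have h : (fun x : EuclideanSpace ℝ (Fin N) => Q x * (∑ j, DD j (DD j ρ) x))
        = fun x => ∑ j, Q x * DD j (DD j ρ) x := funext fun x => Finset.mul_sum _ _ _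
    rw [h]; exact integrable_finset_sum _ fun j _ => integrable_pair Q (DD j (DD j ρ))
  have hIlc : ∀ (i : Fin N) (u : 𝓢(EuclideanSpace ℝ (Fin N), ℝ)) (g : 𝓢(EuclideanSpace ℝ (Fin N), ℝ)),
      Integrable (fun x : EuclideanSpace ℝ (Fin N) => (cLM i x * u x) * (∑ j, DD j (DD j g) x)) volume := by
    intro i u g
    have h : (fun x : EuclideanSpace ℝ (Fin N) => (cLM i x * u x) * (∑ j, DD j (DD j g) x))
        = fun x => ∑ j, (cLM i x * u x) * DD j (DD j g) x :=
      funext fun x => Finset.mul_sum _ _ _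
    rw [h]
    exact integrable_finset_sum _ fun j _ => (integrable_coord_pair i u (DD j (DD j g))).congr
      (Filter.Eventually.of_forall fun x => by ring)
  -- E1
  have hE1 : -(∑ j : Fin N, ∫ x : EuclideanSpace ℝ (Fin N), DD j ρ x * DD j Q x) + (∫ x : EuclideanSpace ℝ (Fin N), ρ x * Q x ^ p)
      = ∫ x : EuclideanSpace ℝ (Fin N), ρ x * Q x := by
    have h0 : ∫ x : EuclideanSpace ℝ (Fin N), (ρ x * (∑ j, DD j (DD j Q) x) + ρ x * Q x ^ p)
        = ∫ x : EuclideanSpace ℝ (Fin N), ρ x * Q x := intc fun x => by linear_combination (ρ x) * hq x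
    rw [isplit2 (fun x : EuclideanSpace ℝ (Fin N) => ρ x * (∑ j, DD j (DD j Q) x)) (fun x => ρ x * Q x ^ p) _
      (fun x => rfl) hIl1 hIρQp] at h0
    rwa [lap_pairing ρ Q] at h0
  -- E2
  have hflipG : (∑ j : Fin N, ∫ x : EuclideanSpace ℝ (Fin N), DD j Q x * DD j ρ x)
      = ∑ j : Fin N, ∫ x : EuclideanSpace ℝ (Fin N), DD j ρ x * DD j Q x :=
    Finset.sum_congr rfl fun j _ => intc fun x => mul_comm _ _
  have hE2 : -(∑ j : Fin N, ∫ x : EuclideanSpace ℝ (Fin N), DD j ρ x * DD j Q x)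
      + (1/4) * (∫ x : EuclideanSpace ℝ (Fin N), nsq x * (Q x * Q x)) + p * (∫ x : EuclideanSpace ℝ (Fin N), ρ x * Q x ^ p)
      = ∫ x : EuclideanSpace ℝ (Fin N), ρ x * Q x := by
    have h0 : ∫ x : EuclideanSpace ℝ (Fin N), (Q x * (∑ j, DD j (DD j ρ) x)
        + (1/4) * (nsq x * (Q x * Q x)) + p * (ρ x * Q x ^ p))
        = ∫ x : EuclideanSpace ℝ (Fin N), ρ x * Q x := intc fun x => by
      linear_combination (-(Q x)) * hρ x + (p * ρ x) * rpow_split Q hQpos x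
    rw [isplit3 (fun x : EuclideanSpace ℝ (Fin N) => Q x * (∑ j, DD j (DD j ρ) x))
      (fun x => (1/4) * (nsq x * (Q x * Q x))) (fun x => p * (ρ x * Q x ^ p)) _
      (fun x => rfl) hIl2 ((integrable_nsq_mul Q Q).const_mul _) (hIρQp.const_mul _)] at h0
    rw [integral_const_mul, integral_const_mul, lap_pairing Q ρ, hflipG] at h0
    exact h0
  -- E4 : V = -(N A + V')
  have hE4i : ∀ i : Fin N, (∫ x : EuclideanSpace ℝ (Fin N), (cLM i x * ρ x) * DD i Q x)
      = -((∫ x : EuclideanSpace ℝ (Fin N), ρ x * Q x) + ∫ x : EuclideanSpace ℝ (Fin N), (cLM i x * DD i ρ x) * Q x) := by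
    intro i
    rw [ibp_coord i ρ Q]
    congr 1
    exact isplit2 (fun x : EuclideanSpace ℝ (Fin N) => ρ x * Q x) (fun x => (cLM i x * DD i ρ x) * Q x) _
      (fun x => by ring) (integrable_pair ρ Q)
      ((integrable_coord_pair i (DD i ρ) Q).congr (Filter.Eventually.of_forall fun x => by ring))
  have hE4 : (∑ i : Fin N, ∫ x : EuclideanSpace ℝ (Fin N), (cLM i x * ρ x) * DD i Q x)
      = -((N : ℝ) * (∫ x : EuclideanSpace ℝ (Fin N), ρ x * Q x)
          + ∑ i : Fin N, ∫ x : EuclideanSpace ℝ (Fin N), (cLM i x * DD i ρ x) * Q x) := by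
    rw [Finset.sum_congr rfl fun i _ => hE4i i, Finset.sum_neg_distrib,
      Finset.sum_add_distrib, Finset.sum_const, Finset.card_univ, Fintype.card_fin,
      nsmul_eq_mul]
  -- ETT : T = -(N Gg + T')
  have hETT : (∑ i : Fin N, ∑ j : Fin N, ∫ x : EuclideanSpace ℝ (Fin N), cLM i x * (DD j (DD i Q) x * DD j ρ x))
      = -((N : ℝ) * (∑ j : Fin N, ∫ x : EuclideanSpace ℝ (Fin N), DD j ρ x * DD j Q x)
          + ∑ i : Fin N, ∑ j : Fin N, ∫ x : EuclideanSpace ℝ (Fin N), cLM i x * (DD j (DD i ρ) x * DD j Q x)) := by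
    have h1 : ∀ i : Fin N,
        (∑ j : Fin N, ∫ x : EuclideanSpace ℝ (Fin N), cLM i x * (DD j (DD i Q) x * DD j ρ x))
        = -((∑ j : Fin N, ∫ x : EuclideanSpace ℝ (Fin N), DD j ρ x * DD j Q x)
            + ∑ j : Fin N, ∫ x : EuclideanSpace ℝ (Fin N), cLM i x * (DD j (DD i ρ) x * DD j Q x)) := by
      intro i
      rw [Finset.sum_congr rfl fun j _ => TT_pairing i j ρ Q, Finset.sum_neg_distrib,
        Finset.sum_add_distrib]
    rw [Finset.sum_congr rfl fun i _ => h1 i, Finset.sum_neg_distrib,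
      Finset.sum_add_distrib, Finset.sum_const, Finset.card_univ, Fintype.card_fin,
      nsmul_eq_mul]
  -- E2D : 2 Dd = -((N+2) S2)
  have hRsum : (∑ i : Fin N, ∫ x : EuclideanSpace ℝ (Fin N), (cLM i x * cLM i x) * (Q x * Q x))
      = ∫ x : EuclideanSpace ℝ (Fin N), nsq x * (Q x * Q x) := by
    rw [← integral_finset_sum _ (fun i _ => integrable_coord_sq_mul i Q Q)]
    exact intc fun x => by rw [← Finset.sum_mul]; rfl
  have hDi : ∀ i : Fin N, 2 * (∫ x : EuclideanSpace ℝ (Fin N), (cLM i x * nsq x * Q x) * DD i Q x)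
      = -((∫ x : EuclideanSpace ℝ (Fin N), nsq x * (Q x * Q x))
          + 2 * ∫ x : EuclideanSpace ℝ (Fin N), (cLM i x * cLM i x) * (Q x * Q x)) := by
    intro i
    have h := ibp_w3 Q i
    have hsplit : ∫ x : EuclideanSpace ℝ (Fin N), ((nsq x + 2 * (cLM i x * cLM i x)) * Q x
          + cLM i x * nsq x * DD i Q x) * Q x
        = (∫ x : EuclideanSpace ℝ (Fin N), nsq x * (Q x * Q x))
          + (∫ x : EuclideanSpace ℝ (Fin N), 2 * ((cLM i x * cLM i x) * (Q x * Q x)))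
          + ∫ x : EuclideanSpace ℝ (Fin N), (cLM i x * nsq x * Q x) * DD i Q x := by
      refine isplit3 (fun x : EuclideanSpace ℝ (Fin N) => nsq x * (Q x * Q x))
        (fun x => 2 * ((cLM i x * cLM i x) * (Q x * Q x)))
        (fun x => (cLM i x * nsq x * Q x) * DD i Q x) _ (fun x => by ring)
        (integrable_nsq_mul Q Q) ((integrable_coord_sq_mul i Q Q).const_mul _)
        ((integrable_w3 i Q (DD i Q)).congr (Filter.Eventually.of_forall fun x => by ring))
    rw [hsplit, integral_const_mul] at h
    linarith [h]
  have hE2D : 2 * (∑ i : Fin N, ∫ x : EuclideanSpace ℝ (Fin N), (cLM i x * nsq x * Q x) * DD i Q x)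
      = -(((N : ℝ) + 2) * ∫ x : EuclideanSpace ℝ (Fin N), nsq x * (Q x * Q x)) := by
    rw [Finset.mul_sum, Finset.sum_congr rfl fun i _ => hDi i, Finset.sum_neg_distrib,
      Finset.sum_add_distrib, Finset.sum_const, Finset.card_univ, Fintype.card_fin,
      nsmul_eq_mul, ← Finset.mul_sum, hRsum]
    ring
  -- E9
  have hE9i : ∀ i : Fin N,
      -((∫ x : EuclideanSpace ℝ (Fin N), DD i ρ x * DD i Q x)
          + ∑ j : Fin N, ∫ x : EuclideanSpace ℝ (Fin N), cLM i x * (DD j (DD i Q) x * DD j ρ x))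
        + (-((∫ x : EuclideanSpace ℝ (Fin N), ρ x * Q x ^ p) + ∫ x : EuclideanSpace ℝ (Fin N), (cLM i x * DD i ρ x) * Q x ^ p))
        + (1/4) * (∫ x : EuclideanSpace ℝ (Fin N), (cLM i x * nsq x * Q x) * DD i Q x)
      = ∫ x : EuclideanSpace ℝ (Fin N), (cLM i x * ρ x) * DD i Q x := by
    intro i
    have h0 : ∫ x : EuclideanSpace ℝ (Fin N), ((cLM i x * DD i Q x) * (∑ j, DD j (DD j ρ) x)
        + (cLM i x * ρ x) * (p * Q x ^ (p-1) * DD i Q x)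
        + (1/4) * ((cLM i x * nsq x * Q x) * DD i Q x))
        = ∫ x : EuclideanSpace ℝ (Fin N), (cLM i x * ρ x) * DD i Q x := intc fun x => by
      linear_combination (-(cLM i x * DD i Q x)) * hρ x
    rw [isplit3 (fun x : EuclideanSpace ℝ (Fin N) => (cLM i x * DD i Q x) * (∑ j, DD j (DD j ρ) x))
      (fun x => (cLM i x * ρ x) * (p * Q x ^ (p-1) * DD i Q x))
      (fun x => (1/4) * ((cLM i x * nsq x * Q x) * DD i Q x)) _ (fun x => rfl)
      (hIlc i (DD i Q) ρ)
      ((integrable_poly_mul ρ (DD i Q) (fun x => p * (cLM i x * Q x ^ (p-1)))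
        (continuous_const.mul ((cLM i).continuous.mul (cont_rpow_sub_one Q hQpos)))
        (|p| * ((SchwartzMap.seminorm ℝ 0 0) Q ^ (p-1))) 1 ?_).congr
        (Filter.Eventually.of_forall fun x => by
          show p * (cLM i x * Q x ^ (p-1)) * (ρ x * DD i Q x)
            = cLM i x * ρ x * (p * Q x ^ (p-1) * DD i Q x)
          ring))
      (((integrable_w3 i Q (DD i Q)).const_mul (1/4 : ℝ)).congr
        (Filter.Eventually.of_forall fun x => by ring))] at h0
    · rw [lap_pairing_coord i (DD i Q) ρ, ibp_rpow hp Q hQpos i ρ, integral_const_mul] at h0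
      rw [show (∫ x : EuclideanSpace ℝ (Fin N), DD i Q x * DD i ρ x) = ∫ x : EuclideanSpace ℝ (Fin N), DD i ρ x * DD i Q x from
        intc fun x => mul_comm _ _] at h0
      rw [show (∫ x : EuclideanSpace ℝ (Fin N), (ρ x + cLM i x * DD i ρ x) * Q x ^ p)
          = (∫ x : EuclideanSpace ℝ (Fin N), ρ x * Q x ^ p) + ∫ x : EuclideanSpace ℝ (Fin N), (cLM i x * DD i ρ x) * Q x ^ p from
        isplit2 (fun x : EuclideanSpace ℝ (Fin N) => ρ x * Q x ^ p) (fun x => (cLM i x * DD i ρ x) * Q x ^ p) _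
          (fun x => by ring) hIρQp (integrable_coord_rpow hp Q hQpos i (DD i ρ))] at h0
      exact h0
    · intro x
      rw [abs_mul, abs_mul, pow_one, cLM_apply]
      calc |p| * (|x i| * |Q x ^ (p-1)|)
          ≤ |p| * (‖x‖ * ((SchwartzMap.seminorm ℝ 0 0) Q ^ (p-1))) := by
            refine mul_le_mul_of_nonneg_left ?_ (abs_nonneg p)
            exact mul_le_mul (abs_coord_le i x) (rpow_sub_one_le hp Q hQpos x)
              (abs_nonneg _) (norm_nonneg x)
      _ ≤ |p| * ((SchwartzMap.seminorm ℝ 0 0) Q ^ (p-1)) * (1 + ‖x‖) := by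
            nlinarith [norm_nonneg x, abs_nonneg p,
              Real.rpow_nonneg (bnd_nonneg Q) (p-1)]
  have hE9 : -((∑ j : Fin N, ∫ x : EuclideanSpace ℝ (Fin N), DD j ρ x * DD j Q x)
          + ∑ i : Fin N, ∑ j : Fin N, ∫ x : EuclideanSpace ℝ (Fin N), cLM i x * (DD j (DD i Q) x * DD j ρ x))
        + (-((N : ℝ) * (∫ x : EuclideanSpace ℝ (Fin N), ρ x * Q x ^ p)
            + ∑ i : Fin N, ∫ x : EuclideanSpace ℝ (Fin N), (cLM i x * DD i ρ x) * Q x ^ p))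
        + (1/4) * (∑ i : Fin N, ∫ x : EuclideanSpace ℝ (Fin N), (cLM i x * nsq x * Q x) * DD i Q x)
      = ∑ i : Fin N, ∫ x : EuclideanSpace ℝ (Fin N), (cLM i x * ρ x) * DD i Q x := by
    rw [Finset.sum_congr rfl fun i _ => (hE9i i).symm, Finset.sum_add_distrib,
      Finset.sum_add_distrib, Finset.sum_neg_distrib, Finset.sum_neg_distrib,
      Finset.sum_add_distrib, Finset.sum_add_distrib, Finset.sum_const, Finset.card_univ,
      Fintype.card_fin, nsmul_eq_mul, ← Finset.mul_sum]
  -- E10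
  have hE10i : ∀ i : Fin N,
      -((∫ x : EuclideanSpace ℝ (Fin N), DD i ρ x * DD i Q x)
          + ∑ j : Fin N, ∫ x : EuclideanSpace ℝ (Fin N), cLM i x * (DD j (DD i ρ) x * DD j Q x))
        + (∫ x : EuclideanSpace ℝ (Fin N), (cLM i x * DD i ρ x) * Q x ^ p)
      = ∫ x : EuclideanSpace ℝ (Fin N), (cLM i x * DD i ρ x) * Q x := by
    intro i
    have h0 : ∫ x : EuclideanSpace ℝ (Fin N), ((cLM i x * DD i ρ x) * (∑ j, DD j (DD j Q) x)
        + (cLM i x * DD i ρ x) * Q x ^ p)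
        = ∫ x : EuclideanSpace ℝ (Fin N), (cLM i x * DD i ρ x) * Q x := intc fun x => by
      linear_combination (cLM i x * DD i ρ x) * hq x
    rw [isplit2 (fun x : EuclideanSpace ℝ (Fin N) => (cLM i x * DD i ρ x) * (∑ j, DD j (DD j Q) x))
      (fun x => (cLM i x * DD i ρ x) * Q x ^ p) _ (fun x => rfl)
      (hIlc i (DD i ρ) Q) (integrable_coord_rpow hp Q hQpos i (DD i ρ))] at h0
    rwa [lap_pairing_coord i (DD i ρ) Q] at h0
  have hE10 : -((∑ j : Fin N, ∫ x : EuclideanSpace ℝ (Fin N), DD j ρ x * DD j Q x)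
          + ∑ i : Fin N, ∑ j : Fin N, ∫ x : EuclideanSpace ℝ (Fin N), cLM i x * (DD j (DD i ρ) x * DD j Q x))
        + (∑ i : Fin N, ∫ x : EuclideanSpace ℝ (Fin N), (cLM i x * DD i ρ x) * Q x ^ p)
      = ∑ i : Fin N, ∫ x : EuclideanSpace ℝ (Fin N), (cLM i x * DD i ρ x) * Q x := by
    rw [Finset.sum_congr rfl fun i _ => (hE10i i).symm, Finset.sum_add_distrib,
      Finset.sum_neg_distrib, Finset.sum_add_distrib]
  -- final assembly
  have hSgoal : (∫ y : EuclideanSpace ℝ (Fin N), ‖y‖ ^ 2 * Q y ^ 2)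
      = ∫ x : EuclideanSpace ℝ (Fin N), nsq x * (Q x * Q x) := intc fun x => by rw [nsq_eq]; ring
  rw [hSgoal]
  have hp1 : p - 1 ≠ 0 := sub_ne_zero.mpr (ne_of_gt hp)
  have hinv : (p - 1) * (p - 1)⁻¹ = 1 := mul_inv_cancel₀ hp1
  linear_combination hE9 + hE10 + hE4 + hETT - (2 - (N:ℝ)) * hE1
    - (1/8) * hE2D + (2/(p-1)) * (hE2 - hE1)
    - (2 * (∫ x : EuclideanSpace ℝ (Fin N), ρ x * Q x ^ p)) * hinv
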